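/- Let n, p, k be even integers with 0 ≤ k < p−1, p < n and n−p+k > p. Let the group G = ℤ/2 × ℤ/2 act on R(n,p,k) × S¹ × S¹ as follows: the generator (1,0) sends (u, z_1, z_2) to (σ_p(u), −z_1, z_2), where σ_p negates the first p coordinates of u, and the generator (0,1) sends (u, z_1, z_2) to (σ_n(u), z_1, −z_2), where σ_n negates the coordinates u_1,…,u_k and u_{p+1},…,u_n. Then the orbit space (R(n,p,k) × S¹ × S¹)/G is homeomorphic to S^{p−1} × S^{n−p−1} × S¹ × S¹. -/

import Mathlib

open Metric

/-- The intersection of two quadrics in ℝⁿ associated to the polytope `P_k`: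
`u₁² + ⋯ + u_p² = p` and `u₁² + ⋯ + u_k² + u_{p+1}² + ⋯ + u_n² = n - p + k`. -/
def quadR (n p k : ℕ) : Set (EuclideanSpace ℝ (Fin n)) :=
  {u | (∑ j : Fin n, if (j : ℕ) < p then u j ^ 2 else 0) = (p : ℝ) ∧
       (∑ j : Fin n, if (j : ℕ) < k ∨ p ≤ (j : ℕ) then u j ^ 2 else 0) = (n : ℝ) - p + k}

/-- The total space `R(n,p,k) × S¹ × S¹`, with `S¹ ⊂ ℂ` the unit circle. -/
abbrev totalSpace4 (n p k : ℕ) : Type :=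
  {x : EuclideanSpace ℝ (Fin n) × ℂ × ℂ //
    x.1 ∈ quadR n p k ∧ x.2.1 ∈ sphere (0 : ℂ) 1 ∧ x.2.2 ∈ sphere (0 : ℂ) 1}

/-- The generator `(1,0)` of `ℤ/2 × ℤ/2`: `(u, z₁, z₂) ↦ (σ_p u, -z₁, z₂)`,
where `σ_p` negates the first `p` coordinates of `u`. -/
def gen1 (n p : ℕ) : EuclideanSpace ℝ (Fin n) × ℂ × ℂ → EuclideanSpace ℝ (Fin n) × ℂ × ℂ :=
  fun x => (WithLp.toLp 2 (fun j : Fin n => if (j : ℕ) < p then -x.1 j else x.1 j), -x.2.1, x.2.2)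

/-- The generator `(0,1)` of `ℤ/2 × ℤ/2`: `(u, z₁, z₂) ↦ (σ_n u, z₁, -z₂)`,
where `σ_n` negates the coordinates `u₁, …, u_k` and `u_{p+1}, …, u_n`. -/
def gen2 (n p k : ℕ) : EuclideanSpace ℝ (Fin n) × ℂ × ℂ → EuclideanSpace ℝ (Fin n) × ℂ × ℂ :=
  fun x => (WithLp.toLp 2 (fun j : Fin n => if (j : ℕ) < k ∨ p ≤ (j : ℕ) then -x.1 j else x.1 j), x.2.1, -x.2.2)

/-- The orbit relation of the `ℤ/2 × ℤ/2`-action generated by `gen1` and `gen2`. -/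
def orbitRel4 (n p k : ℕ) : totalSpace4 n p k → totalSpace4 n p k → Prop :=
  fun a b => ∃ s₁ s₂ : Bool,
    b.val =
      (cond s₁ (gen1 n p) id) ((cond s₂ (gen2 n p k) id) (a : EuclideanSpace ℝ (Fin n) × ℂ × ℂ))

open Complex Finset



noncomputable section Stmt4Aux

/-- Extend a Euclidean vector to a function on `ℕ` by zero. -/
def ext' (m : ℕ) (u : EuclideanSpace ℝ (Fin m)) : ℕ → ℝ :=
  fun j => if h : j < m then u ⟨j, h⟩ else 0

/-- The complex number formed by the coordinate pair containing index `j`. -/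
def pairC (U : ℕ → ℝ) (j : ℕ) : ℂ := ⟨U (2 * (j / 2)), U (2 * (j / 2) + 1)⟩

/-- Multiply the coordinate pairs of `U` by the complex scalars `c` (read at even indices). -/
def twist (c : ℕ → ℂ) (U : ℕ → ℝ) (j : ℕ) : ℝ :=
  if j % 2 = 0 then (c (2 * (j / 2)) * pairC U j).re else (c (2 * (j / 2)) * pairC U j).im

lemma twist_even (c : ℕ → ℂ) (U : ℕ → ℝ) (i : ℕ) :
    twist c U (2 * i) = (c (2 * i) * ⟨U (2 * i), U (2 * i + 1)⟩).re := by
  have h1 : 2 * i % 2 = 0 := by omega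
  have h2 : 2 * (2 * i / 2) = 2 * i := by omega
  simp [twist, pairC, h1, h2]

lemma twist_odd (c : ℕ → ℂ) (U : ℕ → ℝ) (i : ℕ) :
    twist c U (2 * i + 1) = (c (2 * i) * ⟨U (2 * i), U (2 * i + 1)⟩).im := by
  have h1 : ¬((2 * i + 1) % 2 = 0) := by omega
  have h2 : 2 * ((2 * i + 1) / 2) = 2 * i := by omega
  simp [twist, pairC, h1, h2]

lemma pairC_twist (c : ℕ → ℂ) (U : ℕ → ℝ) (j : ℕ) :
    pairC (twist c U) j = c (2 * (j / 2)) * pairC U j := by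
  have e1 : 2 * (2 * (j / 2) / 2) = 2 * (j / 2) := by omega
  apply Complex.ext
  · show twist c U (2 * (j / 2)) = _
    rw [twist_even]
    simp [pairC, e1]
  · show twist c U (2 * (j / 2) + 1) = _
    rw [twist_odd]
    simp [pairC, e1]

lemma twist_twist (c c' : ℕ → ℂ) (U : ℕ → ℝ) (j : ℕ) :
    twist c (twist c' U) j = twist (fun i => c i * c' i) U j := by
  show (if j % 2 = 0 then (c (2*(j/2)) * pairC (twist c' U) j).re
      else (c (2*(j/2)) * pairC (twist c' U) j).im) = _
  rw [pairC_twist, ← mul_assoc]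
  rfl

lemma twist_congr {c c' : ℕ → ℂ} (U : ℕ → ℝ) (j : ℕ)
    (h : c (2 * (j / 2)) = c' (2 * (j / 2))) : twist c U j = twist c' U j := by
  unfold twist; rw [h]

lemma twist_congr_right (c : ℕ → ℂ) {U U' : ℕ → ℝ} (j : ℕ)
    (h1 : U (2 * (j / 2)) = U' (2 * (j / 2))) (h2 : U (2 * (j / 2) + 1) = U' (2 * (j / 2) + 1)) :
    twist c U j = twist c U' j := by
  unfold twist pairC; rw [h1, h2]

lemma twist_real {c : ℕ → ℂ} (U : ℕ → ℝ) (j : ℕ) {x : ℝ}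
    (h : c (2 * (j / 2)) = (x : ℂ)) : twist c U j = x * U j := by
  unfold twist pairC
  rw [h]
  rcases Nat.even_or_odd j with he | ho
  · have h1 : j % 2 = 0 := Nat.even_iff.1 he
    have h2 : 2 * (j / 2) = j := by omega
    simp [h1, h2, Complex.ofReal_re, Complex.ofReal_im]
  · have h1 : ¬(j % 2 = 0) := by have := Nat.odd_iff.1 ho; omega
    have h2 : 2 * (j / 2) + 1 = j := by have := Nat.odd_iff.1 ho; omega
    simp [h1, h2, Complex.ofReal_re, Complex.ofReal_im]

lemma twist_smul (c : ℕ → ℂ) (U : ℕ → ℝ) (a : ℝ) (j : ℕ) :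
    twist c (fun i => a * U i) j = a * twist c U j := by
  have hp : (pairC (fun i => a * U i) j) = (a : ℂ) * pairC U j := by
    apply Complex.ext <;> simp [pairC]
  unfold twist
  rw [hp]
  rcases Nat.decEq (j % 2) 0 with h | h
  · simp only [if_neg h]
    rw [show ∀ z : ℂ, (c (2*(j/2)) * ((a:ℂ) * z)) = (a:ℂ) * (c (2*(j/2)) * z) from fun z => by ring]
    simp
  · simp only [if_pos h]
    rw [show ∀ z : ℂ, (c (2*(j/2)) * ((a:ℂ) * z)) = (a:ℂ) * (c (2*(j/2)) * z) from fun z => by ring]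
    simp

lemma sum_range_pair (h : ℕ) (g : ℕ → ℝ) :
    ∑ j ∈ range (2 * h), g j = ∑ i ∈ range h, (g (2 * i) + g (2 * i + 1)) := by
  induction h with
  | zero => simp
  | succ m ih =>
    have e : 2 * (m + 1) = (2 * m + 1) + 1 := by omega
    rw [e, Finset.sum_range_succ, Finset.sum_range_succ, ih, Finset.sum_range_succ]
    ring

lemma sum_sq_twist {m : ℕ} (hm : Even m) (c : ℕ → ℂ)
    (hc : ∀ i, 2 * i < m → Complex.normSq (c (2 * i)) = 1) (U : ℕ → ℝ) :
    ∑ j ∈ range m, (twist c U j) ^ 2 = ∑ j ∈ range m, (U j) ^ 2 := by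
  obtain ⟨h, rfl⟩ : ∃ h, m = 2 * h := by
    obtain ⟨r, hr⟩ := hm; exact ⟨r, by omega⟩
  rw [sum_range_pair, sum_range_pair]
  refine Finset.sum_congr rfl fun i hi => ?_
  have hi2 : 2 * i < 2 * h := by have := Finset.mem_range.1 hi; omega
  rw [twist_even, twist_odd]
  have e1 : ∀ z : ℂ, z.re ^ 2 + z.im ^ 2 = Complex.normSq z := fun z => by
    simp [Complex.normSq_apply]; ring
  rw [e1, Complex.normSq_mul, hc i hi2, one_mul, Complex.normSq_mk]
  ring

lemma twist_one (U : ℕ → ℝ) (j : ℕ) : twist (fun _ => (1 : ℂ)) U j = U j := by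
  rw [twist_real U j rfl, one_mul]

end Stmt4Aux

section Conv

lemma sum_ite_lt (m q : ℕ) (hq : q ≤ m) (g : ℕ → ℝ) :
    (∑ j ∈ Finset.range m, if j < q then g j else 0) = ∑ j ∈ Finset.range q, g j := by
  rw [← Finset.sum_subset (Finset.range_subset_range.2 hq)
      (fun x _ hx => if_neg (by simpa using hx))]
  exact Finset.sum_congr rfl fun j hj => if_pos (Finset.mem_range.1 hj)

lemma sum_ite_ge (m q : ℕ) (g : ℕ → ℝ) :
    (∑ j ∈ Finset.range m, if q ≤ j then g j else 0) = ∑ j ∈ Finset.range (m - q), g (q + j) := by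
  rw [← Finset.sum_Ico_eq_sum_range, ← Finset.sum_filter]
  apply Finset.sum_congr _ (fun _ _ => rfl)
  ext j
  simp only [Finset.mem_filter, Finset.mem_range, Finset.mem_Ico]
  omega

lemma fin_sum_ite (m : ℕ) (u : EuclideanSpace ℝ (Fin m)) (P : ℕ → Prop) [DecidablePred P] :
    (∑ j : Fin m, if P (j : ℕ) then u j ^ 2 else 0)
      = ∑ j ∈ Finset.range m, (if P j then (ext' m u j) ^ 2 else 0) := by
  rw [← Fin.sum_univ_eq_sum_range (fun j => if P j then (ext' m u j) ^ 2 else 0) m]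
  refine Finset.sum_congr rfl fun j _ => ?_
  by_cases h : P (j : ℕ)
  · rw [if_pos h, if_pos h, ext', dif_pos j.isLt]
  · rw [if_neg h, if_neg h]

lemma quadR_iff (n p k : ℕ) (hkp : k ≤ p) (hpn : p ≤ n) (u : EuclideanSpace ℝ (Fin n)) :
    u ∈ quadR n p k ↔
      (∑ j ∈ Finset.range p, (ext' n u j) ^ 2 = p ∧
       ∑ j ∈ Finset.range k, (ext' n u j) ^ 2
         + ∑ j ∈ Finset.range (n - p), (ext' n u (p + j)) ^ 2 = (n : ℝ) - p + k) := by
  unfold quadR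
  rw [Set.mem_setOf_eq, fin_sum_ite n u (fun j => j < p), fin_sum_ite n u (fun j => j < k ∨ p ≤ j)]
  rw [sum_ite_lt n p hpn]
  have e2 : (∑ j ∈ Finset.range n, if j < k ∨ p ≤ j then (ext' n u j) ^ 2 else 0)
      = ∑ j ∈ Finset.range k, (ext' n u j) ^ 2
        + ∑ j ∈ Finset.range (n - p), (ext' n u (p + j)) ^ 2 := by
    have step : (∑ j ∈ Finset.range n, if j < k ∨ p ≤ j then (ext' n u j) ^ 2 else 0)
        = (∑ j ∈ Finset.range n, if j < k then (ext' n u j) ^ 2 else 0)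
          + (∑ j ∈ Finset.range n, if p ≤ j then (ext' n u j) ^ 2 else 0) := by
      rw [← Finset.sum_add_distrib]
      refine Finset.sum_congr rfl fun j _ => ?_
      by_cases h1 : j < k <;> by_cases h2 : p ≤ j
      · omega
      · simp [h1, h2]
      · simp [h1, h2]
      · simp [h1, h2]
    rw [step, sum_ite_lt n k (le_trans hkp hpn), sum_ite_ge n p]
  rw [e2]

lemma sphere_iff (m : ℕ) (v : EuclideanSpace ℝ (Fin m)) :
    v ∈ Metric.sphere (0 : EuclideanSpace ℝ (Fin m)) 1 ↔
      ∑ j ∈ Finset.range m, (ext' m v j) ^ 2 = 1 := by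
  rw [mem_sphere_zero_iff_norm, EuclideanSpace.norm_eq]
  have e : ∑ i : Fin m, ‖v i‖ ^ 2 = ∑ j ∈ Finset.range m, (ext' m v j) ^ 2 := by
    rw [← Fin.sum_univ_eq_sum_range (fun j => (ext' m v j) ^ 2) m]
    refine Finset.sum_congr rfl fun j _ => ?_
    rw [ext', dif_pos j.isLt, Real.norm_eq_abs, _root_.sq_abs]
  rw [e]
  constructor
  · intro hs
    have h0 : (0:ℝ) ≤ ∑ j ∈ Finset.range m, (ext' m v j) ^ 2 :=
      Finset.sum_nonneg fun _ _ => sq_nonneg _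
    nlinarith [Real.sq_sqrt h0]
  · intro hs; rw [hs, Real.sqrt_one]

lemma circle_normSq {z : ℂ} (hz : z ∈ Metric.sphere (0 : ℂ) 1) : Complex.normSq z = 1 := by
  rw [mem_sphere_zero_iff_norm] at hz
  rw [Complex.normSq_eq_norm_sq, hz, one_pow]

lemma circle_mul_conj {z : ℂ} (hz : z ∈ Metric.sphere (0 : ℂ) 1) :
    z * (starRingEnd ℂ) z = 1 := by
  rw [Complex.mul_conj, circle_normSq hz, Complex.ofReal_one]

lemma circle_sqrt {ζ : ℂ} (hζ : ζ ∈ Metric.sphere (0 : ℂ) 1) :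
    ∃ z : ℂ, z ∈ Metric.sphere (0 : ℂ) 1 ∧ z ^ 2 = ζ := by
  have hne : ζ ≠ 0 := by
    rw [mem_sphere_zero_iff_norm] at hζ
    intro h; rw [h] at hζ; simp at hζ
  refine ⟨Complex.exp (((1:ℝ)/2 : ℝ) * Complex.log ζ), ?_, ?_⟩
  · rw [mem_sphere_zero_iff_norm, Complex.norm_exp]
    rw [Complex.re_ofReal_mul, Complex.log_re]
    rw [mem_sphere_zero_iff_norm] at hζ
    rw [hζ, Real.log_one]
    norm_num
  · rw [sq, ← Complex.exp_add]
    rw [show ((1:ℝ)/2 : ℝ) * Complex.log ζ + ((1:ℝ)/2 : ℝ) * Complex.log ζ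
        = Complex.log ζ by push_cast; ring]
    exact Complex.exp_log hne

lemma sq_eq_cases {z w : ℂ} (h : w ^ 2 = z ^ 2) : w = z ∨ w = -z := by
  have : (w - z) * (w + z) = 0 := by ring_nf; linear_combination h
  rcases mul_eq_zero.1 this with h1 | h1
  · left; exact sub_eq_zero.1 h1
  · right; exact eq_neg_of_add_eq_zero_left h1

end Conv

noncomputable section Main

variable (n p k : ℕ)

/-- scalar pattern for the first-sphere twist -/
def cV (k : ℕ) (z₁ z₂ : ℂ) : ℕ → ℂ :=
  fun j => if j < k then (starRingEnd ℂ) (z₁ * z₂) else (starRingEnd ℂ) z₁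

def c1 (p : ℕ) : ℕ → ℂ := fun j => if j < p then -1 else 1
def c2 (p k : ℕ) : ℕ → ℂ := fun j => if j < k ∨ p ≤ j then -1 else 1

def Ux (x : EuclideanSpace ℝ (Fin n) × ℂ × ℂ) : ℕ → ℝ := ext' n x.1
def Sx (x : EuclideanSpace ℝ (Fin n) × ℂ × ℂ) : ℝ := ∑ j ∈ range k, (Ux n x j) ^ 2
def Qr : ℝ := (n : ℝ) - p + k
def rx (x : EuclideanSpace ℝ (Fin n) × ℂ × ℂ) : ℝ := Real.sqrt (Qr n p k - Sx n k x)

def Vx (x : EuclideanSpace ℝ (Fin n) × ℂ × ℂ) : EuclideanSpace ℝ (Fin p) :=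
  WithLp.toLp 2 fun j : Fin p => (Real.sqrt p)⁻¹ * twist (cV k x.2.1 x.2.2) (Ux n x) (j : ℕ)

def Wx (x : EuclideanSpace ℝ (Fin n) × ℂ × ℂ) : EuclideanSpace ℝ (Fin (n - p)) :=
  WithLp.toLp 2 fun j : Fin (n - p) =>
    (rx n p k x)⁻¹ * twist (fun _ => (starRingEnd ℂ) x.2.2) (fun i => Ux n x (p + i)) (j : ℕ)

def Fraw (x : EuclideanSpace ℝ (Fin n) × ℂ × ℂ) :
    EuclideanSpace ℝ (Fin p) × EuclideanSpace ℝ (Fin (n - p)) × ℂ × ℂ :=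
  (Vx n p k x, Wx n p k x, x.2.1 ^ 2, x.2.2 ^ 2)

variable {n p k}

lemma normSq_cV {z₁ z₂ : ℂ} (h1 : z₁ ∈ sphere (0 : ℂ) 1) (h2 : z₂ ∈ sphere (0 : ℂ) 1) (j : ℕ) :
    Complex.normSq (cV k z₁ z₂ j) = 1 := by
  unfold cV
  split <;> rw [Complex.normSq_conj]
  · rw [Complex.normSq_mul, circle_normSq h1, circle_normSq h2, one_mul]
  · exact circle_normSq h1

lemma Sx_le {x : EuclideanSpace ℝ (Fin n) × ℂ × ℂ} (hu : x.1 ∈ quadR n p k)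
    (hkp : k ≤ p) (hpn : p ≤ n) : Sx n k x ≤ p := by
  have h1 := ((quadR_iff n p k hkp hpn x.1).1 hu).1
  have h2 : Sx n k x ≤ ∑ j ∈ range p, (Ux n x j) ^ 2 :=
    Finset.sum_le_sum_of_subset_of_nonneg (Finset.range_subset_range.2 hkp)
      (fun _ _ _ => sq_nonneg _)
  exact h2.trans (le_of_eq h1)

lemma Qr_sub_pos {x : EuclideanSpace ℝ (Fin n) × ℂ × ℂ} (hu : x.1 ∈ quadR n p k)
    (hkp : k ≤ p) (hpn : p ≤ n) (h2 : 2 * p < n + k) : 0 < Qr n p k - Sx n k x := by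
  have hS := Sx_le hu hkp hpn
  have hc : (2 * p : ℝ) < n + k := by exact_mod_cast h2
  have hp : (p : ℝ) ≤ n := by exact_mod_cast hpn
  unfold Qr
  linarith

lemma rx_pos {x : EuclideanSpace ℝ (Fin n) × ℂ × ℂ} (hu : x.1 ∈ quadR n p k)
    (hkp : k ≤ p) (hpn : p ≤ n) (h2 : 2 * p < n + k) : 0 < rx n p k x :=
  Real.sqrt_pos.2 (Qr_sub_pos hu hkp hpn h2)

lemma rx_sq {x : EuclideanSpace ℝ (Fin n) × ℂ × ℂ} (hu : x.1 ∈ quadR n p k)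
    (hkp : k ≤ p) (hpn : p ≤ n) (h2 : 2 * p < n + k) :
    (rx n p k x) ^ 2 = Qr n p k - Sx n k x :=
  Real.sq_sqrt (Qr_sub_pos hu hkp hpn h2).le

lemma Vx_mem {x : EuclideanSpace ℝ (Fin n) × ℂ × ℂ} (hu : x.1 ∈ quadR n p k)
    (hz1 : x.2.1 ∈ sphere (0 : ℂ) 1) (hz2 : x.2.2 ∈ sphere (0 : ℂ) 1)
    (hkp : k ≤ p) (hpn : p ≤ n) (hp0 : 0 < p) (hpe : Even p) :
    Vx n p k x ∈ sphere (0 : EuclideanSpace ℝ (Fin p)) 1 := by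
  rw [sphere_iff]
  have e : ∀ j ∈ range p, (ext' p (Vx n p k x) j) ^ 2
      = ((Real.sqrt p)⁻¹) ^ 2 * (twist (cV k x.2.1 x.2.2) (Ux n x) j) ^ 2 := by
    intro j hj
    have hjp := Finset.mem_range.1 hj
    rw [ext', dif_pos hjp]
    rw [show (Vx n p k x) ⟨j, hjp⟩
        = (Real.sqrt p)⁻¹ * twist (cV k x.2.1 x.2.2) (Ux n x) j from rfl]
    ring
  rw [Finset.sum_congr rfl e, ← Finset.mul_sum,
    sum_sq_twist hpe _ (fun i _ => normSq_cV hz1 hz2 _) (Ux n x)]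
  unfold Ux
  rw [((quadR_iff n p k hkp hpn x.1).1 hu).1]
  have hps : (0 : ℝ) < p := by exact_mod_cast hp0
  rw [inv_pow, Real.sq_sqrt hps.le, inv_mul_cancel₀ (ne_of_gt hps)]

lemma Wx_mem {x : EuclideanSpace ℝ (Fin n) × ℂ × ℂ} (hu : x.1 ∈ quadR n p k)
    (hz2 : x.2.2 ∈ sphere (0 : ℂ) 1)
    (hkp : k ≤ p) (hpn : p ≤ n) (h2 : 2 * p < n + k) (hne : Even n) (hpe : Even p) :
    Wx n p k x ∈ sphere (0 : EuclideanSpace ℝ (Fin (n - p))) 1 := by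
  rw [sphere_iff]
  have e : ∀ j ∈ range (n - p), (ext' (n - p) (Wx n p k x) j) ^ 2
      = ((rx n p k x)⁻¹) ^ 2
        * (twist (fun _ => (starRingEnd ℂ) x.2.2) (fun i => Ux n x (p + i)) j) ^ 2 := by
    intro j hj
    have hjp := Finset.mem_range.1 hj
    rw [ext', dif_pos hjp]
    rw [show (Wx n p k x) ⟨j, hjp⟩ = (rx n p k x)⁻¹
        * twist (fun _ => (starRingEnd ℂ) x.2.2) (fun i => Ux n x (p + i)) j from rfl]
    ring
  have hnpe : Even (n - p) := (Nat.even_sub hpn).2 (iff_of_true hne hpe)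
  have htail : ∑ j ∈ range (n - p), (Ux n x (p + j)) ^ 2
      = Qr n p k - Sx n k x := by
    have h2q := ((quadR_iff n p k hkp hpn x.1).1 hu).2
    unfold Qr Sx Ux
    linarith [h2q]
  rw [Finset.sum_congr rfl e, ← Finset.mul_sum,
    sum_sq_twist hnpe _ (fun i _ => by
      rw [Complex.normSq_conj]; exact circle_normSq hz2) _, htail]
  have hrx := rx_pos hu hkp hpn h2
  rw [inv_pow, rx_sq hu hkp hpn h2, inv_mul_cancel₀ (ne_of_gt (Qr_sub_pos hu hkp hpn h2))]

lemma Ux_gen1_lt (x : EuclideanSpace ℝ (Fin n) × ℂ × ℂ) {m : ℕ} (hm : m < p) :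
    Ux n (gen1 n p x) m = -Ux n x m := by
  unfold Ux ext' gen1
  by_cases hn : m < n
  · simp [hn, hm]
  · simp [hn]

lemma Ux_gen1_ge (x : EuclideanSpace ℝ (Fin n) × ℂ × ℂ) {m : ℕ} (hm : p ≤ m) :
    Ux n (gen1 n p x) m = Ux n x m := by
  unfold Ux ext' gen1
  by_cases hn : m < n
  · simp [hn, not_lt.2 hm]
  · simp [hn]

lemma Ux_gen2_in (x : EuclideanSpace ℝ (Fin n) × ℂ × ℂ) {m : ℕ} (hm : m < k ∨ p ≤ m) :
    Ux n (gen2 n p k x) m = -Ux n x m := by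
  unfold Ux ext' gen2
  by_cases hn : m < n
  · simp [hn, hm]
  · simp [hn]

lemma Ux_gen2_out (x : EuclideanSpace ℝ (Fin n) × ℂ × ℂ) {m : ℕ} (hm : ¬(m < k ∨ p ≤ m)) :
    Ux n (gen2 n p k x) m = Ux n x m := by
  unfold Ux ext' gen2
  by_cases hn : m < n
  · simp [hn, hm]
  · simp [hn]

lemma Ux_gen1 (hpe : Even p) (x : EuclideanSpace ℝ (Fin n) × ℂ × ℂ) :
    Ux n (gen1 n p x) = twist (c1 p) (Ux n x) := by
  funext j
  obtain ⟨t, ht⟩ := hpe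
  by_cases hb : 2 * (j / 2) < p
  · have hj : j < p := by omega
    rw [twist_real (Ux n x) j (x := -1) (by simp [c1, hb]), Ux_gen1_lt x hj]
    ring
  · have hj : ¬(j < p) := by omega
    rw [twist_real (Ux n x) j (x := 1) (by simp [c1, hb]), Ux_gen1_ge x (not_lt.1 hj)]
    ring

lemma Ux_gen2 (hpe : Even p) (hke : Even k) (x : EuclideanSpace ℝ (Fin n) × ℂ × ℂ) :
    Ux n (gen2 n p k x) = twist (c2 p k) (Ux n x) := by
  funext j
  obtain ⟨t, ht⟩ := hpe
  obtain ⟨s, hs⟩ := hke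
  by_cases hb : 2 * (j / 2) < k ∨ p ≤ 2 * (j / 2)
  · have hj : j < k ∨ p ≤ j := by omega
    rw [twist_real (Ux n x) j (x := -1) (by simp [c2, hb]), Ux_gen2_in x hj]
    ring
  · have hj : ¬(j < k ∨ p ≤ j) := by omega
    rw [twist_real (Ux n x) j (x := 1) (by simp [c2, hb]), Ux_gen2_out x hj]
    ring

end Main

noncomputable section Inv

variable {n p k : ℕ}

lemma Sx_gen1 (hkp : k ≤ p) (x : EuclideanSpace ℝ (Fin n) × ℂ × ℂ) :
    Sx n k (gen1 n p x) = Sx n k x := by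
  unfold Sx
  refine Finset.sum_congr rfl fun j hj => ?_
  rw [Ux_gen1_lt x (lt_of_lt_of_le (Finset.mem_range.1 hj) hkp)]
  ring

lemma Sx_gen2 (x : EuclideanSpace ℝ (Fin n) × ℂ × ℂ) :
    Sx n k (gen2 n p k x) = Sx n k x := by
  unfold Sx
  refine Finset.sum_congr rfl fun j hj => ?_
  rw [Ux_gen2_in x (Or.inl (Finset.mem_range.1 hj))]
  ring

lemma tail_gen1 (x : EuclideanSpace ℝ (Fin n) × ℂ × ℂ) :
    (fun i => Ux n (gen1 n p x) (p + i)) = (fun i => Ux n x (p + i)) :=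
  funext fun i => Ux_gen1_ge x (Nat.le_add_right p i)

lemma tail_gen2 (x : EuclideanSpace ℝ (Fin n) × ℂ × ℂ) :
    (fun i => Ux n (gen2 n p k x) (p + i))
      = twist (fun _ => ((-1 : ℝ) : ℂ)) (fun i => Ux n x (p + i)) :=
  funext fun i => by
    rw [twist_real _ _ rfl, Ux_gen2_in x (Or.inr (Nat.le_add_right p i))]
    ring

lemma Fraw_gen1 (hpe : Even p) (hkp : k ≤ p) (x : EuclideanSpace ℝ (Fin n) × ℂ × ℂ) :
    Fraw n p k (gen1 n p x) = Fraw n p k x := by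
  unfold Fraw
  refine Prod.ext ?_ (Prod.ext ?_ (Prod.ext ?_ ?_))
  · ext j
    simp only [Vx]
    rw [show (gen1 n p x).2.1 = -x.2.1 from rfl, show (gen1 n p x).2.2 = x.2.2 from rfl,
      Ux_gen1 hpe, twist_twist]
    congr 1
    apply twist_congr
    have hb : 2 * ((j : ℕ) / 2) < p := lt_of_le_of_lt (by omega) j.isLt
    by_cases hbk : 2 * ((j : ℕ) / 2) < k
    · simp only [cV, c1, if_pos hbk, if_pos hb]
      rw [neg_mul, map_neg]
      ring
    · simp only [cV, c1, if_neg hbk, if_pos hb]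
      rw [map_neg]
      ring
  · ext j
    simp only [Wx]
    rw [show (gen1 n p x).2.2 = x.2.2 from rfl, tail_gen1 x,
      show rx n p k (gen1 n p x) = rx n p k x from by unfold rx; rw [Sx_gen1 hkp]]
  · show (-x.2.1) ^ 2 = x.2.1 ^ 2
    ring
  · rfl

lemma Fraw_gen2 (hpe : Even p) (hke : Even k) (x : EuclideanSpace ℝ (Fin n) × ℂ × ℂ) :
    Fraw n p k (gen2 n p k x) = Fraw n p k x := by
  unfold Fraw
  refine Prod.ext ?_ (Prod.ext ?_ (Prod.ext ?_ ?_))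
  · ext j
    simp only [Vx]
    rw [show (gen2 n p k x).2.1 = x.2.1 from rfl, show (gen2 n p k x).2.2 = -x.2.2 from rfl,
      Ux_gen2 hpe hke, twist_twist]
    congr 1
    apply twist_congr
    have hb : 2 * ((j : ℕ) / 2) < p := lt_of_le_of_lt (by omega) j.isLt
    by_cases hbk : 2 * ((j : ℕ) / 2) < k
    · simp only [cV, c2, if_pos hbk, if_pos (Or.inl hbk)]
      simp [mul_neg]
    · have : ¬(2 * ((j : ℕ) / 2) < k ∨ p ≤ 2 * ((j : ℕ) / 2)) := by omega
      simp only [cV, c2, if_neg hbk, if_neg this]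
      ring
  · ext j
    simp only [Wx]
    rw [show (gen2 n p k x).2.2 = -x.2.2 from rfl, tail_gen2 x, twist_twist,
      show rx n p k (gen2 n p k x) = rx n p k x from by unfold rx; rw [Sx_gen2]]
    congr 1
    apply twist_congr
    rw [map_neg]
    push_cast
    ring
  · rfl
  · show (-x.2.2) ^ 2 = x.2.2 ^ 2
    ring

end Inv

noncomputable section Inj

variable {n p k : ℕ}

lemma circle_mul_mem {z w : ℂ} (hz : z ∈ sphere (0:ℂ) 1) (hw : w ∈ sphere (0:ℂ) 1) :
    z * w ∈ sphere (0:ℂ) 1 := by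
  rw [mem_sphere_zero_iff_norm] at *
  rw [norm_mul, hz, hw, one_mul]

lemma block_eq (hkp : k + 1 < p) (hpn : p < n) (h2 : 2 * p < n + k)
    (hne : Even n) (hpe : Even p) (hke : Even k)
    {x y : EuclideanSpace ℝ (Fin n) × ℂ × ℂ}
    (hx1 : x.1 ∈ quadR n p k) (hxz1 : x.2.1 ∈ sphere (0:ℂ) 1) (hxz2 : x.2.2 ∈ sphere (0:ℂ) 1)
    (hyz1 : y.2.1 ∈ sphere (0:ℂ) 1) (hyz2 : y.2.2 ∈ sphere (0:ℂ) 1)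
    {ε₁ ε₂ : ℝ} (hε₁ : ε₁ = 1 ∨ ε₁ = -1) (hε₂ : ε₂ = 1 ∨ ε₂ = -1)
    (he1 : y.2.1 = (ε₁ : ℂ) * x.2.1) (he2 : y.2.2 = (ε₂ : ℂ) * x.2.2)
    (hV : Vx n p k x = Vx n p k y) (hW : Wx n p k x = Wx n p k y) :
    ∀ m, m < n → Ux n y m
      = (if m < k then ε₁ * ε₂ else if m < p then ε₁ else ε₂) * Ux n x m := by
  have hp0 : 0 < p := by omega
  have hps : Real.sqrt p ≠ 0 :=
    ne_of_gt (Real.sqrt_pos.2 (by exact_mod_cast hp0))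
  have hTm : ∀ m, m < p → twist (cV k x.2.1 x.2.2) (Ux n x) m
      = twist (cV k y.2.1 y.2.2) (Ux n y) m := by
    intro m hm
    have h := congrArg (fun v : EuclideanSpace ℝ (Fin p) => v (⟨m, hm⟩ : Fin p)) hV
    simp only [Vx] at h
    exact mul_left_cancel₀ (inv_ne_zero hps) h
  set d : ℕ → ℂ := fun i => if i < k then y.2.1 * y.2.2 else y.2.1 with hd
  have main1 : ∀ m, m < p → Ux n y m = (if m < k then ε₁ * ε₂ else ε₁) * Ux n x m := by
    intro m hm
    have hb1 : 2 * (m / 2) < p := by obtain ⟨t, ht⟩ := hpe; omega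
    have hb2 : 2 * (m / 2) + 1 < p := by obtain ⟨t, ht⟩ := hpe; omega
    have hsc1 : (fun i => d i * cV k y.2.1 y.2.2 i) (2 * (m / 2)) = ((1:ℝ):ℂ) := by
      by_cases hbk : 2 * (m / 2) < k
      · simp only [hd, cV, if_pos hbk]
        push_cast
        exact circle_mul_conj (circle_mul_mem hyz1 hyz2)
      · simp only [hd, cV, if_neg hbk]
        push_cast
        exact circle_mul_conj hyz1
    have step1 : Ux n y m = twist d (twist (cV k y.2.1 y.2.2) (Ux n y)) m := by
      rw [twist_twist, twist_real _ m hsc1, one_mul]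
    have step2 : twist d (twist (cV k y.2.1 y.2.2) (Ux n y)) m
        = twist d (twist (cV k x.2.1 x.2.2) (Ux n x)) m :=
      twist_congr_right d m (hTm _ hb1).symm (hTm _ hb2).symm
    have step3 : twist d (twist (cV k x.2.1 x.2.2) (Ux n x)) m
        = (if m < k then ε₁ * ε₂ else ε₁) * Ux n x m := by
      by_cases hmk : m < k
      · have hbk : 2 * (m / 2) < k := by obtain ⟨s, hs⟩ := hke; omega
        have hsc : (fun i => d i * cV k x.2.1 x.2.2 i) (2 * (m / 2))
            = ((ε₁ * ε₂ : ℝ):ℂ) := by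
          simp only [hd, cV, if_pos hbk]
          rw [he1, he2]
          push_cast
          linear_combination ((ε₁:ℂ) * (ε₂:ℂ)) * circle_mul_conj (circle_mul_mem hxz1 hxz2)
        rw [twist_twist, twist_real _ m hsc, if_pos hmk]
      · have hbk : ¬(2 * (m / 2) < k) := by obtain ⟨s, hs⟩ := hke; omega
        have hsc : (fun i => d i * cV k x.2.1 x.2.2 i) (2 * (m / 2)) = ((ε₁ : ℝ):ℂ) := by
          simp only [hd, cV, if_neg hbk]
          rw [he1]
          push_cast
          linear_combination (ε₁:ℂ) * circle_mul_conj hxz1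
        rw [twist_twist, twist_real _ m hsc, if_neg hmk]
    rw [step1, step2, step3]
  have hS : Sx n k y = Sx n k x := by
    unfold Sx
    refine Finset.sum_congr rfl fun j hj => ?_
    have hjk := Finset.mem_range.1 hj
    rw [main1 j (by omega), if_pos hjk]
    rcases hε₁ with rfl | rfl <;> rcases hε₂ with rfl | rfl <;> ring
  have hrw : rx n p k y = rx n p k x := by unfold rx; rw [hS]
  have hTW : ∀ m, m < n - p →
      twist (fun _ => (starRingEnd ℂ) x.2.2) (fun i => Ux n x (p + i)) m
        = twist (fun _ => (starRingEnd ℂ) y.2.2) (fun i => Ux n y (p + i)) m := by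
    intro m hm
    have h := congrArg (fun v : EuclideanSpace ℝ (Fin (n - p)) => v (⟨m, hm⟩ : Fin (n - p))) hW
    simp only [Wx] at h
    rw [hrw] at h
    exact mul_left_cancel₀
      (inv_ne_zero (ne_of_gt (rx_pos hx1 (by omega) (by omega) h2))) h
  have hnpe : Even (n - p) := (Nat.even_sub (by omega)).2 (iff_of_true hne hpe)
  have main2 : ∀ m, m < n - p → Ux n y (p + m) = ε₂ * Ux n x (p + m) := by
    intro m hm
    have hb1 : 2 * (m / 2) < n - p := by obtain ⟨t, ht⟩ := hnpe; omega
    have hb2 : 2 * (m / 2) + 1 < n - p := by obtain ⟨t, ht⟩ := hnpe; omega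
    have hsc1 : (fun i => (fun _ => y.2.2) i * (fun _ => (starRingEnd ℂ) y.2.2) i) (2 * (m / 2))
        = ((1:ℝ):ℂ) := by
      push_cast
      exact circle_mul_conj hyz2
    have step1 : Ux n y (p + m)
        = twist (fun _ => y.2.2)
            (twist (fun _ => (starRingEnd ℂ) y.2.2) (fun i => Ux n y (p + i))) m := by
      rw [twist_twist, twist_real _ m hsc1, one_mul]
    have step2 : twist (fun _ => y.2.2)
          (twist (fun _ => (starRingEnd ℂ) y.2.2) (fun i => Ux n y (p + i))) m
        = twist (fun _ => y.2.2)
          (twist (fun _ => (starRingEnd ℂ) x.2.2) (fun i => Ux n x (p + i))) m :=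
      twist_congr_right _ m (hTW _ hb1).symm (hTW _ hb2).symm
    have hsc : (fun i => (fun _ => y.2.2) i * (fun _ => (starRingEnd ℂ) x.2.2) i) (2 * (m / 2))
        = ((ε₂ : ℝ):ℂ) := by
      rw [he2]
      push_cast
      linear_combination (ε₂:ℂ) * circle_mul_conj hxz2
    have step3 : twist (fun _ => y.2.2)
          (twist (fun _ => (starRingEnd ℂ) x.2.2) (fun i => Ux n x (p + i))) m
        = ε₂ * Ux n x (p + m) := by
      rw [twist_twist, twist_real _ m hsc]
    rw [step1, step2, step3]
  intro m hmn
  by_cases hmp : m < p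
  · rw [main1 m hmp]
    by_cases hmk : m < k
    · rw [if_pos hmk, if_pos hmk]
    · rw [if_neg hmk, if_neg hmk, if_pos hmp]
  · have hm' : m = p + (m - p) := by omega
    rw [hm', main2 (m - p) (by omega), if_neg (by omega : ¬(p + (m - p) < k)),
      if_neg (by omega : ¬(p + (m - p) < p))]

end Inj
noncomputable section Inj2

variable {n p k : ℕ}

lemma Fraw_inj (hkp : k + 1 < p) (hpn : p < n) (h2 : 2 * p < n + k)
    (hne : Even n) (hpe : Even p) (hke : Even k)
    {x y : EuclideanSpace ℝ (Fin n) × ℂ × ℂ}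
    (hx : x.1 ∈ quadR n p k ∧ x.2.1 ∈ sphere (0:ℂ) 1 ∧ x.2.2 ∈ sphere (0:ℂ) 1)
    (hy : y.1 ∈ quadR n p k ∧ y.2.1 ∈ sphere (0:ℂ) 1 ∧ y.2.2 ∈ sphere (0:ℂ) 1)
    (hF : Fraw n p k x = Fraw n p k y) :
    ∃ s₁ s₂ : Bool, y = (cond s₁ (gen1 n p) id) ((cond s₂ (gen2 n p k) id) x) := by
  have hV : Vx n p k x = Vx n p k y := congrArg Prod.fst hF
  have hW : Wx n p k x = Wx n p k y := congrArg (fun t => t.2.1) hF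
  have hsq1 : y.2.1 ^ 2 = x.2.1 ^ 2 := (congrArg (fun t => t.2.2.1) hF).symm
  have hsq2 : y.2.2 ^ 2 = x.2.2 ^ 2 := (congrArg (fun t => t.2.2.2) hF).symm
  have coord : ∀ (ε₁ ε₂ : ℝ), (ε₁ = 1 ∨ ε₁ = -1) → (ε₂ = 1 ∨ ε₂ = -1) →
      y.2.1 = (ε₁:ℂ) * x.2.1 → y.2.2 = (ε₂:ℂ) * x.2.2 →
      ∀ j : Fin n, y.1 j
        = (if (j:ℕ) < k then ε₁ * ε₂ else if (j:ℕ) < p then ε₁ else ε₂) * x.1 j := by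
    intro ε₁ ε₂ hε₁ hε₂ he1 he2 j
    have hU := block_eq hkp hpn h2 hne hpe hke hx.1 hx.2.1 hx.2.2 hy.2.1 hy.2.2
      hε₁ hε₂ he1 he2 hV hW (j:ℕ) j.isLt
    have ha : Ux n y (j:ℕ) = y.1 j := by simp [Ux, ext', j.isLt]
    have hb : Ux n x (j:ℕ) = x.1 j := by simp [Ux, ext', j.isLt]
    rw [← ha, ← hb]
    exact hU
  rcases sq_eq_cases hsq1 with he1 | he1 <;> rcases sq_eq_cases hsq2 with he2 | he2
  · refine ⟨false, false, ?_⟩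
    show y = x
    have he1' : y.2.1 = ((1:ℝ):ℂ) * x.2.1 := by rw [he1]; push_cast; ring
    have he2' : y.2.2 = ((1:ℝ):ℂ) * x.2.2 := by rw [he2]; push_cast; ring
    refine Prod.ext ?_ (Prod.ext ?_ ?_)
    · ext j
      rw [coord 1 1 (Or.inl rfl) (Or.inl rfl) he1' he2' j]
      split_ifs <;> ring
    · exact he1
    · exact he2
  · refine ⟨false, true, ?_⟩
    show y = gen2 n p k x
    have he1' : y.2.1 = ((1:ℝ):ℂ) * x.2.1 := by rw [he1]; push_cast; ring
    have he2' : y.2.2 = ((-1:ℝ):ℂ) * x.2.2 := by rw [he2]; push_cast; ring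
    refine Prod.ext ?_ (Prod.ext ?_ ?_)
    · ext j
      show y.1 j = if (j:ℕ) < k ∨ p ≤ (j:ℕ) then -x.1 j else x.1 j
      rw [coord 1 (-1) (Or.inl rfl) (Or.inr rfl) he1' he2' j]
      split_ifs <;> first | omega | ring
    · exact he1
    · show y.2.2 = -x.2.2
      rw [he2']; push_cast; ring
  · refine ⟨true, false, ?_⟩
    show y = gen1 n p x
    have he1' : y.2.1 = ((-1:ℝ):ℂ) * x.2.1 := by rw [he1]; push_cast; ring
    have he2' : y.2.2 = ((1:ℝ):ℂ) * x.2.2 := by rw [he2]; push_cast; ring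
    refine Prod.ext ?_ (Prod.ext ?_ ?_)
    · ext j
      show y.1 j = if (j:ℕ) < p then -x.1 j else x.1 j
      rw [coord (-1) 1 (Or.inr rfl) (Or.inl rfl) he1' he2' j]
      split_ifs <;> first | omega | ring
    · show y.2.1 = -x.2.1
      rw [he1']; push_cast; ring
    · exact he2
  · refine ⟨true, true, ?_⟩
    show y = gen1 n p (gen2 n p k x)
    have he1' : y.2.1 = ((-1:ℝ):ℂ) * x.2.1 := by rw [he1]; push_cast; ring
    have he2' : y.2.2 = ((-1:ℝ):ℂ) * x.2.2 := by rw [he2]; push_cast; ring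
    refine Prod.ext ?_ (Prod.ext ?_ ?_)
    · ext j
      show y.1 j = if (j:ℕ) < p
          then -(if (j:ℕ) < k ∨ p ≤ (j:ℕ) then -x.1 j else x.1 j)
          else (if (j:ℕ) < k ∨ p ≤ (j:ℕ) then -x.1 j else x.1 j)
      rw [coord (-1) (-1) (Or.inr rfl) (Or.inr rfl) he1' he2' j]
      split_ifs <;> first | omega | ring
    · show y.2.1 = -x.2.1
      rw [he1']; push_cast; ring
    · show y.2.2 = -x.2.2
      rw [he2']; push_cast; ring

end Inj2
noncomputable section Surj

variable {n p k : ℕ}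

set_option maxHeartbeats 2000000 in
lemma Fraw_surj (hkp : k + 1 < p) (hpn : p < n) (h2 : 2 * p < n + k)
    (hne : Even n) (hpe : Even p) (hke : Even k)
    (v : EuclideanSpace ℝ (Fin p)) (hv : v ∈ sphere (0 : EuclideanSpace ℝ (Fin p)) 1)
    (w : EuclideanSpace ℝ (Fin (n - p)))
    (hw : w ∈ sphere (0 : EuclideanSpace ℝ (Fin (n - p))) 1)
    (ζ₁ : ℂ) (hζ₁ : ζ₁ ∈ sphere (0:ℂ) 1) (ζ₂ : ℂ) (hζ₂ : ζ₂ ∈ sphere (0:ℂ) 1) :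
    ∃ x : EuclideanSpace ℝ (Fin n) × ℂ × ℂ,
      (x.1 ∈ quadR n p k ∧ x.2.1 ∈ sphere (0:ℂ) 1 ∧ x.2.2 ∈ sphere (0:ℂ) 1) ∧
      Fraw n p k x = (v, w, ζ₁, ζ₂) := by
  obtain ⟨z₁, hz₁, hz₁sq⟩ := circle_sqrt hζ₁
  obtain ⟨z₂, hz₂, hz₂sq⟩ := circle_sqrt hζ₂
  have hp0 : (0:ℝ) < p := by exact_mod_cast (by omega : 0 < p)
  have hsp : Real.sqrt p ≠ 0 := ne_of_gt (Real.sqrt_pos.2 hp0)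
  set Uv : ℕ → ℝ := ext' p v with hUv
  set Ww : ℕ → ℝ := ext' (n - p) w with hWw
  set Sv : ℝ := ∑ j ∈ range k, (Uv j) ^ 2 with hSv
  set csf : ℕ → ℂ := fun i => if i < k then z₁ * z₂ else z₁ with hcsf
  set rr : ℝ := Real.sqrt (Qr n p k - p * Sv) with hrr
  set Un : ℕ → ℝ := fun j =>
    if j < p then Real.sqrt p * twist csf Uv j
    else if j < n then rr * twist (fun _ => z₂) Ww (j - p) else 0 with hUn
  set u : EuclideanSpace ℝ (Fin n) := WithLp.toLp 2 (fun j : Fin n => Un (j:ℕ)) with hu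
  have hUxu : ∀ j, ext' n u j = Un j := by
    intro j
    unfold ext'
    by_cases hn : j < n
    · rw [dif_pos hn]
    · rw [dif_neg hn, hUn]
      simp only
      rw [if_neg (by omega), if_neg hn]
  have hsum_v : ∑ j ∈ range p, (Uv j) ^ 2 = 1 := (sphere_iff p v).1 hv
  have hsum_w : ∑ j ∈ range (n - p), (Ww j) ^ 2 = 1 := (sphere_iff _ w).1 hw
  have hSv1 : Sv ≤ 1 := by
    rw [← hsum_v, hSv]
    exact Finset.sum_le_sum_of_subset_of_nonneg (Finset.range_subset_range.2 (by omega))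
      (fun _ _ _ => sq_nonneg _)
  have hQpos : 0 < Qr n p k - p * Sv := by
    have hc : (2 * p : ℝ) < n + k := by exact_mod_cast h2
    have hpn' : (p : ℝ) ≤ n := by exact_mod_cast hpn.le
    have hm : (p:ℝ) * Sv ≤ (p:ℝ) * 1 := mul_le_mul_of_nonneg_left hSv1 hp0.le
    unfold Qr
    linarith
  have hrrpos : 0 < rr := Real.sqrt_pos.2 hQpos
  have hrr2 : rr ^ 2 = Qr n p k - p * Sv := Real.sq_sqrt hQpos.le
  have hcs : ∀ i, Complex.normSq (csf i) = 1 := by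
    intro i
    rw [hcsf]
    by_cases hik : i < k
    · simp only [if_pos hik]
      rw [Complex.normSq_mul, circle_normSq hz₁, circle_normSq hz₂, one_mul]
    · simp only [if_neg hik]
      exact circle_normSq hz₁
  have hnpe : Even (n - p) := (Nat.even_sub (by omega)).2 (iff_of_true hne hpe)
  have A1 : ∑ j ∈ range p, (Un j) ^ 2 = p := by
    have e : ∀ j ∈ range p, (Un j) ^ 2 = (Real.sqrt p) ^ 2 * (twist csf Uv j) ^ 2 := by
      intro j hj
      rw [hUn]
      simp only [if_pos (Finset.mem_range.1 hj)]
      ring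
    rw [Finset.sum_congr rfl e, ← Finset.mul_sum,
      sum_sq_twist hpe csf (fun i _ => hcs _) Uv, hsum_v,
      Real.sq_sqrt hp0.le, mul_one]
  have A2 : ∑ j ∈ range k, (Un j) ^ 2 = p * Sv := by
    have e : ∀ j ∈ range k, (Un j) ^ 2 = (Real.sqrt p) ^ 2 * (twist csf Uv j) ^ 2 := by
      intro j hj
      rw [hUn]
      simp only [if_pos (by have := Finset.mem_range.1 hj; omega : j < p)]
      ring
    rw [Finset.sum_congr rfl e, ← Finset.mul_sum,
      sum_sq_twist hke csf (fun i _ => hcs _) Uv, Real.sq_sqrt hp0.le]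
  have A3 : ∑ j ∈ range (n - p), (Un (p + j)) ^ 2 = Qr n p k - p * Sv := by
    have e : ∀ j ∈ range (n - p), (Un (p + j)) ^ 2
        = rr ^ 2 * (twist (fun _ => z₂) Ww j) ^ 2 := by
      intro j hj
      have hj' := Finset.mem_range.1 hj
      rw [hUn]
      simp only
      rw [if_neg (by omega), if_pos (by omega), Nat.add_sub_cancel_left]
      ring
    rw [Finset.sum_congr rfl e, ← Finset.mul_sum,
      sum_sq_twist hnpe _ (fun i _ => circle_normSq hz₂) Ww, hsum_w, mul_one, hrr2]
  have hUE : ext' n u = Un := funext hUxu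
  have hmem : u ∈ quadR n p k := by
    refine (quadR_iff n p k (by omega) (by omega) u).2 ⟨?_, ?_⟩
    · rw [hUE]; exact A1
    · rw [hUE, A2, A3]; unfold Qr; ring
  have hSxeq : Sx n k (u, z₁, z₂) = p * Sv := by
    unfold Sx
    rw [Finset.sum_congr rfl (fun j _ => by
      rw [show Ux n ((u, z₁, z₂) : EuclideanSpace ℝ (Fin n) × ℂ × ℂ) j = Un j from hUxu j])]
    exact A2
  have hrx : rx n p k (u, z₁, z₂) = rr := by unfold rx; rw [hSxeq, hrr]
  refine ⟨(u, z₁, z₂), ⟨hmem, hz₁, hz₂⟩, ?_⟩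
  refine Prod.ext ?_ (Prod.ext ?_ (Prod.ext ?_ ?_))
  · ext j
    show (Real.sqrt p)⁻¹
        * twist (cV k z₁ z₂) (Ux n ((u, z₁, z₂) : EuclideanSpace ℝ (Fin n) × ℂ × ℂ)) (j:ℕ)
      = v j
    have hb1 : 2 * ((j:ℕ) / 2) < p := lt_of_le_of_lt (by omega) j.isLt
    have hb2 : 2 * ((j:ℕ) / 2) + 1 < p := by
      obtain ⟨t, ht⟩ := hpe; have := j.isLt; omega
    have hrepl : twist (cV k z₁ z₂) (Ux n ((u, z₁, z₂) : EuclideanSpace ℝ (Fin n) × ℂ × ℂ)) (j:ℕ)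
        = twist (cV k z₁ z₂) (fun i => Real.sqrt p * twist csf Uv i) (j:ℕ) := by
      refine twist_congr_right _ _ ?_ ?_
      · refine (hUxu _).trans ?_
        rw [hUn]; simp only; rw [if_pos hb1]
      · refine (hUxu _).trans ?_
        rw [hUn]; simp only; rw [if_pos hb2]
    rw [hrepl, twist_smul, twist_twist]
    have hsc : (fun i => cV k z₁ z₂ i * csf i) (2 * ((j:ℕ) / 2)) = ((1:ℝ):ℂ) := by
      simp only [cV, hcsf]
      by_cases hbk : 2 * ((j:ℕ) / 2) < k
      · rw [if_pos hbk, if_pos hbk]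
        push_cast
        linear_combination circle_mul_conj (circle_mul_mem hz₁ hz₂)
      · rw [if_neg hbk, if_neg hbk]
        push_cast
        linear_combination circle_mul_conj hz₁
    rw [twist_real _ _ hsc, one_mul, ← mul_assoc, inv_mul_cancel₀ hsp, one_mul]
    simp [hUv, ext', j.isLt]
  · ext j
    show (rx n p k ((u, z₁, z₂) : EuclideanSpace ℝ (Fin n) × ℂ × ℂ))⁻¹
        * twist (fun _ => (starRingEnd ℂ) z₂)
            (fun i => Ux n ((u, z₁, z₂) : EuclideanSpace ℝ (Fin n) × ℂ × ℂ) (p + i)) (j:ℕ)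
      = w j
    have hb1 : 2 * ((j:ℕ) / 2) < n - p := lt_of_le_of_lt (by omega) j.isLt
    have hb2 : 2 * ((j:ℕ) / 2) + 1 < n - p := by
      obtain ⟨t, ht⟩ := hnpe; have := j.isLt; omega
    have hrepl : twist (fun _ => (starRingEnd ℂ) z₂)
          (fun i => Ux n ((u, z₁, z₂) : EuclideanSpace ℝ (Fin n) × ℂ × ℂ) (p + i)) (j:ℕ)
        = twist (fun _ => (starRingEnd ℂ) z₂)
            (fun i => rr * twist (fun _ => z₂) Ww i) (j:ℕ) := by
      refine twist_congr_right _ _ ?_ ?_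
      · refine (hUxu _).trans ?_
        rw [hUn]; simp only
        rw [if_neg (by omega), if_pos (by omega), Nat.add_sub_cancel_left]
      · refine (hUxu _).trans ?_
        rw [hUn]; simp only
        rw [if_neg (by omega), if_pos (by omega), Nat.add_sub_cancel_left]
    rw [hrx, hrepl, twist_smul, twist_twist]
    have hsc : (fun i => ((fun _ => (starRingEnd ℂ) z₂) i) * ((fun _ => z₂) i)) (2 * ((j:ℕ) / 2))
        = ((1:ℝ):ℂ) := by
      push_cast
      linear_combination circle_mul_conj hz₂
    rw [twist_real _ _ hsc, one_mul, ← mul_assoc, inv_mul_cancel₀ (ne_of_gt hrrpos), one_mul]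
    simp [hWw, ext', j.isLt]
  · exact hz₁sq
  · exact hz₂sq

end Surj
noncomputable section Cont

variable {n p k : ℕ}

lemma contUx (m : ℕ) : Continuous (fun a : totalSpace4 n p k => Ux n a.val m) := by
  by_cases hn : m < n
  · have e : (fun a : totalSpace4 n p k => Ux n a.val m)
        = fun a => a.val.1 ⟨m, hn⟩ := by
      funext a; simp [Ux, ext', hn]
    rw [e]
    exact (PiLp.continuous_apply 2 _ (⟨m, hn⟩ : Fin n)).comp (continuous_fst.comp continuous_subtype_val)
  · have e : (fun a : totalSpace4 n p k => Ux n a.val m) = fun _ => 0 := by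
      funext a; simp [Ux, ext', hn]
    rw [e]; exact continuous_const

lemma cont_twist (m : ℕ) {g : totalSpace4 n p k → ℂ} (hg : Continuous g)
    {U : totalSpace4 n p k → ℕ → ℝ} (hU : ∀ i, Continuous fun a => U a i) :
    Continuous fun a => twist (fun _ => g a) (U a) m := by
  have hpair : Continuous fun a => pairC (U a) m := by
    have e : (fun a => pairC (U a) m)
        = fun a => ((U a (2 * (m / 2)) : ℝ) : ℂ)
            + ((U a (2 * (m / 2) + 1) : ℝ) : ℂ) * Complex.I :=
      funext fun a => Complex.mk_eq_add_mul_I _ _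
    rw [e]
    exact ((Complex.continuous_ofReal.comp (hU _)).add
      ((Complex.continuous_ofReal.comp (hU _)).mul continuous_const))
  unfold twist
  split_ifs with hsp
  · exact Complex.continuous_re.comp (hg.mul hpair)
  · exact Complex.continuous_im.comp (hg.mul hpair)

lemma cz1 : Continuous (fun a : totalSpace4 n p k => a.val.2.1) :=
  continuous_fst.comp (continuous_snd.comp continuous_subtype_val)

lemma cz2 : Continuous (fun a : totalSpace4 n p k => a.val.2.2) :=
  continuous_snd.comp (continuous_snd.comp continuous_subtype_val)

lemma contSx : Continuous (fun a : totalSpace4 n p k => Sx n k a.val) := by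
  unfold Sx
  exact continuous_finset_sum _ (fun j _ => (contUx j).pow 2)

lemma contV (j : ℕ) : Continuous
    (fun a : totalSpace4 n p k => twist (cV k a.val.2.1 a.val.2.2) (Ux n a.val) j) := by
  have e : (fun a : totalSpace4 n p k => twist (cV k a.val.2.1 a.val.2.2) (Ux n a.val) j)
      = fun a => twist (fun _ => cV k a.val.2.1 a.val.2.2 (2 * (j / 2))) (Ux n a.val) j :=
    funext fun a => twist_congr _ _ rfl
  rw [e]
  refine cont_twist j ?_ (fun i => contUx i)
  by_cases hc : 2 * (j / 2) < k
  · simp only [cV, if_pos hc]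
    exact continuous_star.comp (cz1.mul cz2)
  · simp only [cV, if_neg hc]
    exact continuous_star.comp cz1

lemma contW (j : ℕ) : Continuous
    (fun a : totalSpace4 n p k =>
      twist (fun _ => (starRingEnd ℂ) a.val.2.2) (fun i => Ux n a.val (p + i)) j) :=
  cont_twist j (continuous_star.comp cz2) (fun i => contUx (p + i))

lemma quadR_compact (hkp : k + 1 < p) (hpn : p < n) : IsCompact (quadR n p k) := by
  have contmap : Continuous (fun u : EuclideanSpace ℝ (Fin n) =>
      ((∑ j : Fin n, if (j:ℕ) < p then u j ^ 2 else 0,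
        ∑ j : Fin n, if (j:ℕ) < k ∨ p ≤ (j:ℕ) then u j ^ 2 else 0) : ℝ × ℝ)) := by
    refine Continuous.prodMk ?_ ?_ <;>
      refine continuous_finset_sum _ (fun j _ => ?_)
    · by_cases hc : (j:ℕ) < p
      · simp only [if_pos hc]; exact (PiLp.continuous_apply 2 _ j).pow 2
      · simp only [if_neg hc]; exact continuous_const
    · by_cases hc : (j:ℕ) < k ∨ p ≤ (j:ℕ)
      · simp only [if_pos hc]; exact (PiLp.continuous_apply 2 _ j).pow 2
      · simp only [if_neg hc]; exact continuous_const
  have hclosed : IsClosed (quadR n p k) := by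
    have e : quadR n p k = (fun u : EuclideanSpace ℝ (Fin n) =>
        ((∑ j : Fin n, if (j:ℕ) < p then u j ^ 2 else 0,
          ∑ j : Fin n, if (j:ℕ) < k ∨ p ≤ (j:ℕ) then u j ^ 2 else 0) : ℝ × ℝ))
          ⁻¹' {((p : ℝ), (n : ℝ) - p + k)} := by
      ext u
      simp [quadR, Prod.ext_iff]
    rw [e]
    exact isClosed_singleton.preimage contmap
  have hsub : quadR n p k ⊆ closedBall 0 (Real.sqrt ((p : ℝ) + ((n : ℝ) - p + k))) := by
    intro u hu
    rw [mem_closedBall_zero_iff, EuclideanSpace.norm_eq]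
    apply Real.sqrt_le_sqrt
    have hb : ∀ i : Fin n, ‖u i‖ ^ 2
        ≤ (if (i:ℕ) < p then u i ^ 2 else 0) + (if (i:ℕ) < k ∨ p ≤ (i:ℕ) then u i ^ 2 else 0) := by
      intro i
      rw [Real.norm_eq_abs, _root_.sq_abs]
      split_ifs <;> first | omega | nlinarith [sq_nonneg (u i)]
    calc ∑ i : Fin n, ‖u i‖ ^ 2
        ≤ ∑ i : Fin n, ((if (i:ℕ) < p then u i ^ 2 else 0)
            + (if (i:ℕ) < k ∨ p ≤ (i:ℕ) then u i ^ 2 else 0)) := Finset.sum_le_sum fun i _ => hb i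
      _ = (p : ℝ) + ((n : ℝ) - p + k) := by
          rw [Finset.sum_add_distrib, hu.1, hu.2]
  exact (isCompact_closedBall 0 _).of_isClosed_subset hclosed hsub

lemma total_compact (hkp : k + 1 < p) (hpn : p < n) : CompactSpace (totalSpace4 n p k) := by
  have e : {x : EuclideanSpace ℝ (Fin n) × ℂ × ℂ |
      x.1 ∈ quadR n p k ∧ x.2.1 ∈ sphere (0:ℂ) 1 ∧ x.2.2 ∈ sphere (0:ℂ) 1}
      = quadR n p k ×ˢ (sphere (0:ℂ) 1 ×ˢ sphere (0:ℂ) 1) := by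
    ext x
    simp [Set.mem_prod]
  have hc : IsCompact {x : EuclideanSpace ℝ (Fin n) × ℂ × ℂ |
      x.1 ∈ quadR n p k ∧ x.2.1 ∈ sphere (0:ℂ) 1 ∧ x.2.2 ∈ sphere (0:ℂ) 1} := by
    rw [e]
    exact (quadR_compact hkp hpn).prod ((isCompact_sphere 0 1).prod (isCompact_sphere 0 1))
  exact isCompact_iff_compactSpace.1 hc

end Cont
/-- For even `n, p, k`, the orbit space `(R(n,p,k) × S¹ × S¹)/(ℤ/2 × ℤ/2)` is homeomorphic to
`S^{p-1} × S^{n-p-1} × S¹ × S¹`. -/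
theorem stmt4 (n p k : ℕ) (hkp : k + 1 < p) (hpn : p < n) (h : 2 * p < n + k)
    (hne : Even n) (hpe : Even p) (hke : Even k) :
    Nonempty (Quot (orbitRel4 n p k) ≃ₜ
      sphere (0 : EuclideanSpace ℝ (Fin p)) 1 ×
      sphere (0 : EuclideanSpace ℝ (Fin (n - p))) 1 ×
      sphere (0 : ℂ) 1 × sphere (0 : ℂ) 1) := by
  haveI : CompactSpace (totalSpace4 n p k) := total_compact hkp hpn
  let F : totalSpace4 n p k →
      sphere (0 : EuclideanSpace ℝ (Fin p)) 1 ×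
      sphere (0 : EuclideanSpace ℝ (Fin (n - p))) 1 ×
      sphere (0 : ℂ) 1 × sphere (0 : ℂ) 1 := fun a =>
    (⟨Vx n p k a.val, Vx_mem a.2.1 a.2.2.1 a.2.2.2 (by omega) (by omega) (by omega) hpe⟩,
     ⟨Wx n p k a.val, Wx_mem a.2.1 a.2.2.2 (by omega) (by omega) h hne hpe⟩,
     ⟨a.val.2.1 ^ 2, by
        rw [mem_sphere_zero_iff_norm, norm_pow, mem_sphere_zero_iff_norm.1 a.2.2.1, one_pow]⟩,
     ⟨a.val.2.2 ^ 2, by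
        rw [mem_sphere_zero_iff_norm, norm_pow, mem_sphere_zero_iff_norm.1 a.2.2.2, one_pow]⟩)
  have hFconst : ∀ a b, orbitRel4 n p k a b → F a = F b := by
    intro a b hab
    obtain ⟨s₁, s₂, hb⟩ := hab
    have hfr : Fraw n p k a.val = Fraw n p k b.val := by
      rw [hb]
      cases s₁ <;> cases s₂
      · exact rfl
      · exact (Fraw_gen2 hpe hke a.val).symm
      · exact (Fraw_gen1 hpe (by omega) a.val).symm
      · exact ((Fraw_gen1 hpe (by omega) (gen2 n p k a.val)).trans
          (Fraw_gen2 hpe hke a.val)).symm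
    refine Prod.ext (Subtype.ext ?_) (Prod.ext (Subtype.ext ?_)
      (Prod.ext (Subtype.ext ?_) (Subtype.ext ?_)))
    · exact congrArg Prod.fst hfr
    · exact congrArg (fun t => t.2.1) hfr
    · exact congrArg (fun t => t.2.2.1) hfr
    · exact congrArg (fun t => t.2.2.2) hfr
  have hcont : Continuous F := by
    refine Continuous.prodMk ?_ (Continuous.prodMk ?_ (Continuous.prodMk ?_ ?_))
    · refine Continuous.subtype_mk ?_ _
      refine (PiLp.continuous_toLp 2 _).comp (continuous_pi fun j => ?_)
      exact continuous_const.mul (contV (j : ℕ))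
    · refine Continuous.subtype_mk ?_ _
      refine (PiLp.continuous_toLp 2 _).comp (continuous_pi fun j => ?_)
      refine Continuous.mul ?_ (contW (j : ℕ))
      refine Continuous.inv₀ ?_ ?_
      · exact Real.continuous_sqrt.comp (continuous_const.sub contSx)
      · exact fun a => ne_of_gt (rx_pos a.2.1 (by omega) (by omega) h)
    · exact (cz1.pow 2).subtype_mk _
    · exact (cz2.pow 2).subtype_mk _
  have key : ∀ a b : totalSpace4 n p k, F a = F b → Quot.mk (orbitRel4 n p k) a = Quot.mk (orbitRel4 n p k) b := by
    intro a b hFab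
    have hfr : Fraw n p k a.val = Fraw n p k b.val := by
      refine Prod.ext ?_ (Prod.ext ?_ (Prod.ext ?_ ?_))
      · exact congrArg (fun t => ((t.1 : {z // z ∈ sphere (0 : EuclideanSpace ℝ (Fin p)) 1}) :
          EuclideanSpace ℝ (Fin p))) hFab
      · exact congrArg (fun t => ((t.2.1 : {z // z ∈ sphere (0 : EuclideanSpace ℝ (Fin (n - p))) 1}) :
          EuclideanSpace ℝ (Fin (n - p)))) hFab
      · exact congrArg (fun t => (t.2.2.1 : ℂ)) hFab
      · exact congrArg (fun t => (t.2.2.2 : ℂ)) hFab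
    obtain ⟨s₁, s₂, hy⟩ := Fraw_inj hkp hpn h hne hpe hke a.2 b.2 hfr
    exact Quot.sound ⟨s₁, s₂, hy⟩
  have hinj : Function.Injective (Quot.lift F hFconst) := by
    intro qa qb hq
    induction qa using Quot.ind with
    | _ a =>
      induction qb using Quot.ind with
      | _ b => exact key a b hq
  have hsurj : Function.Surjective (Quot.lift F hFconst) := by
    rintro ⟨⟨v, hv⟩, ⟨w, hw⟩, ⟨ζ₁, hζ₁⟩, ⟨ζ₂, hζ₂⟩⟩
    obtain ⟨x, hmem, hfr⟩ := Fraw_surj hkp hpn h hne hpe hke v hv w hw ζ₁ hζ₁ ζ₂ hζ₂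
    refine ⟨Quot.mk _ ⟨x, hmem⟩, ?_⟩
    show F ⟨x, hmem⟩ = _
    refine Prod.ext (Subtype.ext ?_) (Prod.ext (Subtype.ext ?_)
      (Prod.ext (Subtype.ext ?_) (Subtype.ext ?_)))
    · exact congrArg Prod.fst hfr
    · exact congrArg (fun t => t.2.1) hfr
    · exact congrArg (fun t => t.2.2.1) hfr
    · exact congrArg (fun t => t.2.2.2) hfr
  exact ⟨Continuous.homeoOfEquivCompactToT2
    (f := Equiv.ofBijective (Quot.lift F hFconst) ⟨hinj, hsurj⟩)
    (continuous_quot_lift hFconst hcont)⟩
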